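/- Let T be a rectangular tableau with r+1 rows and s columns whose j-th column consists of the consecutive integers l_j, l_j+1, ..., l_j+r, with l_j + r < l_{j+1} for all j, and entries bounded by n. Then pr^{n-(l_s+r)+(r+1)}(T) is the tableau whose first column is 1,2,...,r+1, and whose column j+1 (for 1 <= j <= s-1) consists of the entries of column j of T each increased by n-(l_s+r)+(r+1). -/

import Mathlib

/-!  Schützenberger promotion on rectangular tableaux, modelled as functions
`T : ℕ → ℕ → ℕ` (row, column ↦ entry, rows and columns indexed from `0`)
with `0` for empty cells. -/

/-- Update the entry of `T` at `(r, c)` to `v`. -/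
def setEntry (T : ℕ → ℕ → ℕ) (r c v : ℕ) : ℕ → ℕ → ℕ :=
  fun r' c' => if r' = r ∧ c' = c then v else T r' c'

/-- Jeu de taquin slide of a hole at `(r, c)` towards the inner (top-left)
boundary; `fuel` bounds the number of steps. -/
def jdtSlide : ℕ → (ℕ → ℕ → ℕ) → ℕ → ℕ → (ℕ → ℕ → ℕ)
  | 0, T, _, _ => T
  | fuel + 1, T, r, c =>
    let a := if r = 0 then 0 else T (r - 1) c
    let b := if c = 0 then 0 else T r (c - 1)
    if a = 0 ∧ b = 0 then T
    else if b ≤ a then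
      jdtSlide fuel (setEntry (setEntry T r c a) (r - 1) c 0) (r - 1) c
    else
      jdtSlide fuel (setEntry (setEntry T r c b) r (c - 1) 0) r (c - 1)

/-- Remove the entry at cell `rc` and slide the hole to the inner boundary. -/
def removeAndSlide (T : ℕ → ℕ → ℕ) (rc : ℕ × ℕ) : ℕ → ℕ → ℕ :=
  jdtSlide (rc.1 + rc.2 + 1) (setEntry T rc.1 rc.2 0) rc.1 rc.2

/-- The cells of the `rows × cols` rectangle whose entry is `n`, listed from
bottom to top (left to right within each row). -/
def cellsWithMax (rows cols n : ℕ) (T : ℕ → ℕ → ℕ) : List (ℕ × ℕ) :=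
  (List.range rows).reverse.flatMap fun r =>
    (List.range cols).filterMap fun c =>
      if T r c = n then some (r, c) else none

/-- Promotion with respect to `n` on a `rows × cols` rectangular tableau. -/
def promotion (rows cols n : ℕ) (T : ℕ → ℕ → ℕ) : ℕ → ℕ → ℕ :=
  fun r c =>
    if r < rows ∧ c < cols then
      ((cellsWithMax rows cols n T).foldl removeAndSlide T) r c + 1
    else 0


set_option maxHeartbeats 1000000

lemma jdt_step_up (fuel : ℕ) (T : ℕ → ℕ → ℕ) (i c : ℕ) (hi : i ≠ 0)
    (ha : 0 < T (i-1) c) (hb : (if c = 0 then 0 else T i (c-1)) ≤ T (i-1) c) :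
    jdtSlide (fuel+1) T i c
      = jdtSlide fuel (setEntry (setEntry T i c (T (i-1) c)) (i-1) c 0) (i-1) c := by
  simp only [jdtSlide, if_neg hi]
  rw [if_neg, if_pos hb]
  rintro ⟨h1, -⟩; omega

lemma jdt_step_left (fuel : ℕ) (T : ℕ → ℕ → ℕ) (i c : ℕ) (hc : c ≠ 0)
    (hb : (if i = 0 then 0 else T (i-1) c) < T i (c-1)) :
    jdtSlide (fuel+1) T i c
      = jdtSlide fuel (setEntry (setEntry T i c (T i (c-1))) i (c-1) 0) i (c-1) := by
  simp only [jdtSlide, if_neg hc]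
  rw [if_neg, if_neg (by omega)]
  rintro ⟨-, h2⟩
  split at hb <;> omega

lemma jdt_stop (fuel : ℕ) (T : ℕ → ℕ → ℕ) :
    jdtSlide fuel T 0 0 = T := by
  cases fuel <;> simp [jdtSlide]

lemma jdt_climb (c : ℕ) : ∀ (d : ℕ) (fuel i : ℕ) (T : ℕ → ℕ → ℕ),
    d ≤ fuel → d ≤ i → T i c = 0 →
    (∀ p, i - d < p → p ≤ i → 0 < T (p-1) c ∧ (0 < c → T p (c-1) ≤ T (p-1) c)) →
    jdtSlide fuel T i c =
      jdtSlide (fuel - d)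
        (fun p q => if q = c ∧ i - d ≤ p ∧ p ≤ i then (if p = i - d then 0 else T (p-1) c)
          else T p q)
        (i - d) c := by
  intro d
  induction d with
  | zero =>
    intro fuel i T _ _ h0 _
    simp only [Nat.sub_zero]
    have hF : (fun p q => if q = c ∧ i ≤ p ∧ p ≤ i then (if p = i then 0 else T (p-1) c)
          else T p q) = T := by
      funext p q
      by_cases h : q = c ∧ i ≤ p ∧ p ≤ i
      · have hp : p = i := by omega
        have hq : q = c := h.1
        subst hp hq
        rw [if_pos h, if_pos rfl, h0]
      · rw [if_neg h]
    rw [hF]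
  | succ d ih =>
    intro fuel i T hf hi h0 hcond
    obtain ⟨fuel', rfl⟩ : ∃ f', fuel = f' + 1 := ⟨fuel - 1, by omega⟩
    have hi0 : i ≠ 0 := by omega
    have ha : 0 < T (i-1) c := (hcond i (by omega) le_rfl).1
    have hb : (if c = 0 then 0 else T i (c-1)) ≤ T (i-1) c := by
      split
      · omega
      · exact (hcond i (by omega) le_rfl).2 (by omega)
    rw [jdt_step_up fuel' T i c hi0 ha hb]
    set T₂ := setEntry (setEntry T i c (T (i-1) c)) (i-1) c 0 with hT₂
    have hT₂eval : ∀ p q, T₂ p q =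
        if p = i - 1 ∧ q = c then 0 else if p = i ∧ q = c then T (i-1) c else T p q := by
      intro p q; simp only [hT₂, setEntry]
    have key := ih fuel' (i-1) T₂ (by omega) (by omega)
      (by rw [hT₂eval]; simp)
      (by
        intro p hp1 hp2
        have e1 : T₂ (p-1) c = T (p-1) c := by
          rw [hT₂eval]; rw [if_neg (by omega), if_neg (by omega)]
        constructor
        · rw [e1]; exact (hcond p (by omega) (by omega)).1
        · intro hc
          have e2 : T₂ p (c-1) = T p (c-1) := by
            rw [hT₂eval]; rw [if_neg (by omega), if_neg (by omega)]
          rw [e1, e2]; exact (hcond p (by omega) (by omega)).2 hc)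
    rw [key]
    have hfe : fuel' - d = fuel' + 1 - (d+1) := by omega
    have hie : i - 1 - d = i - (d+1) := by omega
    rw [hfe, hie]
    have hFF : (fun p q => if q = c ∧ i - (d+1) ≤ p ∧ p ≤ i - 1 then
          (if p = i - (d+1) then 0 else T₂ (p-1) c) else T₂ p q)
        = (fun p q => if q = c ∧ i - (d+1) ≤ p ∧ p ≤ i then
          (if p = i - (d+1) then 0 else T (p-1) c) else T p q) := by
      funext p q
      by_cases h : q = c ∧ i - (d+1) ≤ p ∧ p ≤ i - 1
      · rw [if_pos h, if_pos (by omega : q = c ∧ i - (d+1) ≤ p ∧ p ≤ i)]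
        by_cases hp : p = i - (d+1)
        · rw [if_pos hp, if_pos hp]
        · rw [if_neg hp, if_neg hp, hT₂eval]
          rw [if_neg (by omega), if_neg (by omega)]
      · rw [if_neg h]
        by_cases h2 : q = c ∧ i - (d+1) ≤ p ∧ p ≤ i
        · have hp : p = i := by omega
          rw [if_pos h2, if_neg (by omega), hT₂eval, if_neg (by omega), if_pos (by omega)]
          subst hp
          rfl
        · rw [if_neg h2, hT₂eval, if_neg (by omega), if_neg (by omega)]
    rw [hFF]

lemma jdt_left (i : ℕ) : ∀ (d : ℕ) (fuel c : ℕ) (T : ℕ → ℕ → ℕ),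
    d ≤ fuel → d ≤ c → T i c = 0 →
    (∀ q, c - d < q → q ≤ c → 0 < T i (q-1) ∧ (0 < i → T (i-1) q < T i (q-1))) →
    jdtSlide fuel T i c =
      jdtSlide (fuel - d)
        (fun p q => if p = i ∧ c - d ≤ q ∧ q ≤ c then (if q = c - d then 0 else T i (q-1))
          else T p q)
        i (c - d) := by
  intro d
  induction d with
  | zero =>
    intro fuel c T _ _ h0 _
    simp only [Nat.sub_zero]
    have hF : (fun p q => if p = i ∧ c ≤ q ∧ q ≤ c then (if q = c then 0 else T i (q-1))
          else T p q) = T := by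
      funext p q
      by_cases h : p = i ∧ c ≤ q ∧ q ≤ c
      · have hq : q = c := by omega
        have hp : p = i := h.1
        subst hp hq
        rw [if_pos h, if_pos rfl, h0]
      · rw [if_neg h]
    rw [hF]
  | succ d ih =>
    intro fuel c T hf hc h0 hcond
    obtain ⟨fuel', rfl⟩ : ∃ f', fuel = f' + 1 := ⟨fuel - 1, by omega⟩
    have hc0 : c ≠ 0 := by omega
    have hb : (if i = 0 then 0 else T (i-1) c) < T i (c-1) := by
      split
      · exact (hcond c (by omega) le_rfl).1
      · exact (hcond c (by omega) le_rfl).2 (by omega)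
    rw [jdt_step_left fuel' T i c hc0 hb]
    set T₂ := setEntry (setEntry T i c (T i (c-1))) i (c-1) 0 with hT₂
    have hT₂eval : ∀ p q, T₂ p q =
        if p = i ∧ q = c - 1 then 0 else if p = i ∧ q = c then T i (c-1) else T p q := by
      intro p q; simp only [hT₂, setEntry]
    have key := ih fuel' (c-1) T₂ (by omega) (by omega)
      (by rw [hT₂eval]; simp)
      (by
        intro q hq1 hq2
        have e1 : T₂ i (q-1) = T i (q-1) := by
          rw [hT₂eval]; rw [if_neg (by omega), if_neg (by omega)]
        constructor
        · rw [e1]; exact (hcond q (by omega) (by omega)).1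
        · intro hi
          have e2 : T₂ (i-1) q = T (i-1) q := by
            rw [hT₂eval]; rw [if_neg (by omega), if_neg (by omega)]
          rw [e1, e2]; exact (hcond q (by omega) (by omega)).2 hi)
    rw [key]
    have hfe : fuel' - d = fuel' + 1 - (d+1) := by omega
    have hce : c - 1 - d = c - (d+1) := by omega
    rw [hfe, hce]
    have hFF : (fun p q => if p = i ∧ c - (d+1) ≤ q ∧ q ≤ c - 1 then
          (if q = c - (d+1) then 0 else T₂ i (q-1)) else T₂ p q)
        = (fun p q => if p = i ∧ c - (d+1) ≤ q ∧ q ≤ c then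
          (if q = c - (d+1) then 0 else T i (q-1)) else T p q) := by
      funext p q
      by_cases h : p = i ∧ c - (d+1) ≤ q ∧ q ≤ c - 1
      · rw [if_pos h, if_pos (by omega : p = i ∧ c - (d+1) ≤ q ∧ q ≤ c)]
        by_cases hq : q = c - (d+1)
        · rw [if_pos hq, if_pos hq]
        · rw [if_neg hq, if_neg hq, hT₂eval]
          rw [if_neg (by omega), if_neg (by omega)]
      · rw [if_neg h]
        by_cases h2 : p = i ∧ c - (d+1) ≤ q ∧ q ≤ c
        · have hq : q = c := by omega
          rw [if_pos h2, if_neg (by omega), hT₂eval, if_neg (by omega), if_pos (by omega)]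
          subst hq
          rfl
        · rw [if_neg h2, hT₂eval, if_neg (by omega), if_neg (by omega)]
    rw [hFF]

lemma cellsWithMax_nil (rows cols n : ℕ) (T : ℕ → ℕ → ℕ)
    (h : ∀ p q, p < rows → q < cols → T p q ≠ n) :
    cellsWithMax rows cols n T = [] := by
  rw [List.eq_nil_iff_forall_not_mem]
  intro x hx
  simp only [cellsWithMax, List.mem_flatMap, List.mem_reverse, List.mem_range,
    List.mem_filterMap] at hx
  obtain ⟨p, hp, q, hq, hpq⟩ := hx
  split at hpq
  · exact h p q hp hq (by assumption)
  · exact Option.some_ne_none _ hpq.symm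

lemma cellsWithMax_single (r s n : ℕ) (hs : 0 < s) (T : ℕ → ℕ → ℕ)
    (hmax : T r (s-1) = n)
    (h : ∀ p q, p < r + 1 → q < s → (p, q) ≠ (r, s-1) → T p q ≠ n) :
    cellsWithMax (r+1) s n T = [(r, s-1)] := by
  have hrange : (List.range (r+1)).reverse = r :: (List.range r).reverse := by
    rw [List.range_succ, List.reverse_append]; rfl
  rw [cellsWithMax, hrange, List.flatMap_cons]
  have h2 : ((List.range r).reverse.flatMap fun p =>
      (List.range s).filterMap fun c => if T p c = n then some (p, c) else none) = [] := by
    rw [List.eq_nil_iff_forall_not_mem]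
    intro x hx
    simp only [List.mem_flatMap, List.mem_reverse, List.mem_range, List.mem_filterMap] at hx
    obtain ⟨p, hp, q, hq, hpq⟩ := hx
    split at hpq
    · exact h p q (by omega) hq (by intro he; rw [Prod.mk.injEq] at he; omega) (by assumption)
    · exact Option.some_ne_none _ hpq.symm
  rw [h2, List.append_nil]
  obtain ⟨s', rfl⟩ : ∃ s', s = s' + 1 := ⟨s - 1, by omega⟩
  rw [List.range_succ, List.filterMap_append]
  have h3 : ((List.range s').filterMap fun c => if T r c = n then some (r, c) else none) = [] := by
    rw [List.eq_nil_iff_forall_not_mem]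
    intro x hx
    simp only [List.mem_filterMap, List.mem_range] at hx
    obtain ⟨q, hq, hpq⟩ := hx
    split at hpq
    · exact h r q (by omega) (by omega) (by intro he; rw [Prod.mk.injEq] at he; omega)
        (by assumption)
    · exact Option.some_ne_none _ hpq.symm
  rw [h3, List.nil_append]
  simp only [List.filterMap_cons, Nat.add_sub_cancel] at hmax ⊢
  rw [if_pos hmax]
  rfl

lemma promotion_no_max (rows cols n : ℕ) (T : ℕ → ℕ → ℕ)
    (h : ∀ p q, p < rows → q < cols → T p q ≠ n) :
    promotion rows cols n T = fun p q => if p < rows ∧ q < cols then T p q + 1 else 0 := by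
  unfold promotion
  rw [cellsWithMax_nil rows cols n T h, List.foldl_nil]

/-- The tableau after `k + t` promotions (`0 ≤ t ≤ r+1`). -/
def stage (l : ℕ → ℕ) (r s k t : ℕ) : ℕ → ℕ → ℕ :=
  fun i j => if i ≤ r ∧ j < s then
    (if i < t then (if j = 0 then i + 1 else l (j-1) + i + k + t)
     else if j = s - 1 then l (s-1) + i + k else l j + i + k + t)
  else 0

lemma stage_pos (l : ℕ → ℕ) (r s k t : ℕ) (hl1 : ∀ j, j < s → 1 ≤ l j)
    (i j : ℕ) (hi : i ≤ r) (hj : j < s) : 0 < stage l r s k t i j := by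
  have a1 := hl1 j hj
  have a2 := hl1 (s-1) (by omega)
  have a3 := hl1 (j-1) (by omega)
  simp only [stage]
  rw [if_pos ⟨hi, hj⟩]
  split_ifs <;> omega

lemma step_lemma (n r s k t : ℕ) (hs : 0 < s) (ht : t ≤ r)
    (l : ℕ → ℕ) (hl1 : ∀ j, j < s → 1 ≤ l j)
    (hsep : ∀ a b, a < b → b < s → l a + r + 1 ≤ l b)
    (hn : n = l (s-1) + r + k) :
    promotion (r+1) s n (stage l r s k t) = stage l r s k (t+1) := by
  have hl0 : 1 ≤ l (s-1) := hl1 (s-1) (by omega)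
  set T0 := stage l r s k t with hT0
  have hT0val : ∀ i j, i ≤ r → j < s → T0 i j =
      (if i < t then (if j = 0 then i + 1 else l (j-1) + i + k + t)
       else if j = s - 1 then l (s-1) + i + k else l j + i + k + t) := by
    intro i j hi hj
    simp only [hT0, stage]
    rw [if_pos ⟨hi, hj⟩]
  -- step 1 : the unique maximal cell
  have hmax : T0 r (s-1) = n := by
    rw [hT0val r (s-1) le_rfl (by omega), if_neg (by omega), if_pos rfl]
    omega
  have huniq : ∀ p q, p < r + 1 → q < s → (p, q) ≠ (r, s-1) → T0 p q ≠ n := by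
    intro p q hp hq hne
    have hne' : ¬(p = r ∧ q = s - 1) := by
      intro ⟨h1, h2⟩; exact hne (by rw [h1, h2])
    rw [hT0val p q (by omega) hq]
    by_cases h1 : p < t
    · rw [if_pos h1]
      by_cases h2 : q = 0
      · rw [if_pos h2]; omega
      · rw [if_neg h2]
        have := hsep (q-1) (s-1) (by omega) (by omega)
        omega
    · rw [if_neg h1]
      by_cases h2 : q = s - 1
      · rw [if_pos h2]; omega
      · rw [if_neg h2]
        have := hsep q (s-1) (by omega) (by omega)
        omega
  have hcells : cellsWithMax (r+1) s n T0 = [(r, s-1)] :=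
    cellsWithMax_single r s n hs T0 hmax huniq
  -- step 2 : compute the slide
  set T0' := setEntry T0 r (s-1) 0 with hT0'
  have hT0'val : ∀ p q, T0' p q = if p = r ∧ q = s-1 then 0 else T0 p q := by
    intro p q; simp only [hT0', setEntry]
  have slide : removeAndSlide T0 (r, s-1) =
      (fun p q => if q = 0 ∧ 0 ≤ p ∧ p ≤ t then
          (if p = 0 then 0
           else (fun p q => if p = t ∧ 0 ≤ q ∧ q ≤ s-1 then
                  (if q = 0 then 0
                   else (fun p q => if q = s-1 ∧ t ≤ p ∧ p ≤ r then
                          (if p = t then 0 else T0' (p-1) (s-1)) else T0' p q) t (q-1))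
                 else (fun p q => if q = s-1 ∧ t ≤ p ∧ p ≤ r then
                          (if p = t then 0 else T0' (p-1) (s-1)) else T0' p q) p q) (p-1) 0)
        else (fun p q => if p = t ∧ 0 ≤ q ∧ q ≤ s-1 then
                  (if q = 0 then 0
                   else (fun p q => if q = s-1 ∧ t ≤ p ∧ p ≤ r then
                          (if p = t then 0 else T0' (p-1) (s-1)) else T0' p q) t (q-1))
                 else (fun p q => if q = s-1 ∧ t ≤ p ∧ p ≤ r then
                          (if p = t then 0 else T0' (p-1) (s-1)) else T0' p q) p q) p q) := by
    unfold removeAndSlide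
    simp only
    rw [jdt_climb (s-1) (r-t) (r + (s-1) + 1) r T0' (by omega) (by omega)
      (by rw [hT0'val]; simp)
      (by
        intro p hp1 hp2
        have hpt : t < p := by omega
        have e1 : T0' (p-1) (s-1) = l (s-1) + (p-1) + k := by
          rw [hT0'val, if_neg (by omega), hT0val (p-1) (s-1) (by omega) (by omega),
            if_neg (by omega), if_pos rfl]
        constructor
        · omega
        · intro hc
          have e2 : T0' p ((s-1)-1) = l ((s-1)-1) + p + k + t := by
            rw [hT0'val, if_neg (by omega), hT0val p ((s-1)-1) (by omega) (by omega),
              if_neg (by omega), if_neg (by omega)]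
          rw [e1, e2]
          have := hsep ((s-1)-1) (s-1) (by omega) (by omega)
          omega)]
    rw [show r - (r-t) = t from by omega, show r + (s-1) + 1 - (r-t) = (s-1) + (t+1) from by omega]
    set F1 := (fun p q => if q = s-1 ∧ t ≤ p ∧ p ≤ r then
        (if p = t then 0 else T0' (p-1) (s-1)) else T0' p q) with hF1
    rw [jdt_left t (s-1) ((s-1) + (t+1)) (s-1) F1 (by omega) (by omega)
      (by simp only [hF1, true_and, and_true]; split_ifs <;> omega)
      (by
        intro q hq1 hq2
        have hq0 : 0 < q := by omega
        have u1 : T0' t (q-1) = l (q-1) + t + k + t := by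
          rw [hT0'val, if_neg (by omega), hT0val t (q-1) (by omega) (by omega),
            if_neg (by omega), if_neg (by omega)]
        have hlq : 1 ≤ l (q-1) := hl1 (q-1) (by omega)
        have e1 : F1 t (q-1) = l (q-1) + t + k + t := by
          simp only [hF1, true_and, and_true]
          split_ifs <;> omega
        constructor
        · rw [e1]; omega
        · intro hti
          have u2 : T0' (t-1) q = if q = 0 then t else l (q-1) + (t-1) + k + t := by
            rw [hT0'val, if_neg (by omega), hT0val (t-1) q (by omega) (by omega),
              if_pos (by omega)]
            congr 1
            omega
          rw [if_neg (by omega)] at u2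
          have e2 : F1 (t-1) q = l (q-1) + (t-1) + k + t := by
            simp only [hF1]
            split_ifs <;> omega
          rw [e1, e2]
          omega)]
    rw [show (s-1) - (s-1) = 0 from by omega, show (s-1) + (t+1) - (s-1) = t + 1 from by omega]
    set F2 := (fun p q => if p = t ∧ 0 ≤ q ∧ q ≤ s-1 then
        (if q = 0 then 0 else F1 t (q-1)) else F1 p q) with hF2
    rw [jdt_climb 0 t (t+1) t F2 (by omega) (by omega)
      (by simp only [hF2, true_and, and_true]; split_ifs <;> omega)
      (by
        intro p hp1 hp2
        refine ⟨?_, by omega⟩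
        have u1 : T0' (p-1) 0 = p := by
          rw [hT0'val, if_neg (by omega), hT0val (p-1) 0 (by omega) (by omega),
            if_pos (by omega), if_pos rfl]
          omega
        have e1 : F2 (p-1) 0 = p := by
          simp only [hF2, hF1, true_and, and_true]
          split_ifs <;> omega
        rw [e1]
        omega)]
    rw [show t - t = 0 from by omega, show t + 1 - t = 1 from by omega, jdt_stop]
    simp only [hF2, hF1]
  -- step 3 : assemble
  unfold promotion
  rw [hcells, List.foldl_cons, List.foldl_nil, slide]
  funext i j
  by_cases hrect : i < r + 1 ∧ j < s
  · rw [if_pos hrect]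
    beta_reduce
    simp only [stage]
    rw [if_pos (by omega : i ≤ r ∧ j < s)]
    by_cases hj0 : j = 0
    · subst hj0
      by_cases hit : i ≤ t
      · by_cases hi0 : i = 0
        · subst hi0
          split_ifs <;> omega
        · have u1 : T0' (i-1) 0 = i := by
            rw [hT0'val, if_neg (by omega), hT0val (i-1) 0 (by omega) (by omega),
              if_pos (by omega), if_pos rfl]
            omega
          split_ifs <;> omega
      · -- i > t, j = 0
        by_cases hs1 : s = 1
        · have u1 : T0' (i-1) (s-1) = l (s-1) + (i-1) + k := by
            rw [hT0'val, if_neg (by omega), hT0val (i-1) (s-1) (by omega) (by omega),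
              if_neg (by omega), if_pos rfl]
          have u2 : (0:ℕ) = s - 1 := by omega
          split_ifs <;> omega
        · have u1 : T0' i 0 = l 0 + i + k + t := by
            rw [hT0'val, if_neg (by omega), hT0val i 0 (by omega) (by omega),
              if_neg (by omega), if_neg (by omega)]
          split_ifs <;> omega
    · -- j ≥ 1, so s ≥ 2
      have hj1 : 1 ≤ j := by omega
      have hs2 : 2 ≤ s := by omega
      by_cases hit : i < t
      · have u1 : T0' i j = l (j-1) + i + k + t := by
          rw [hT0'val, if_neg (by omega), hT0val i j (by omega) (by omega),
            if_pos hit, if_neg hj0]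
        split_ifs <;> omega
      · by_cases hieq : i = t
        · have u1 : T0' t (j-1) = l (j-1) + t + k + t := by
            rw [hT0'val, if_neg (by omega), hT0val t (j-1) (by omega) (by omega),
              if_neg (by omega), if_neg (by omega)]
          split_ifs <;> omega
        · -- i > t
          by_cases hjs : j = s - 1
          · have u1 : T0' (i-1) (s-1) = l (s-1) + (i-1) + k := by
              rw [hT0'val, if_neg (by omega), hT0val (i-1) (s-1) (by omega) (by omega),
                if_neg (by omega), if_pos rfl]
            split_ifs <;> omega
          · have u1 : T0' i j = l j + i + k + t := by
              rw [hT0'val, if_neg (by omega), hT0val i j (by omega) (by omega),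
                if_neg (by omega), if_neg hjs]
            split_ifs <;> omega
  · rw [if_neg hrect]
    simp only [stage]
    rw [if_neg (by omega)]

lemma pre_lemma (n r s k m : ℕ) (hs : 0 < s) (hm : m < k)
    (l : ℕ → ℕ)
    (hsep : ∀ a b, a < b → b < s → l a + r + 1 ≤ l b)
    (hn : n = l (s-1) + r + k) :
    promotion (r+1) s n (fun i j => if i ≤ r ∧ j < s then l j + i + m else 0)
      = fun i j => if i ≤ r ∧ j < s then l j + i + (m+1) else 0 := by
  have hmono : ∀ q, q < s → l q ≤ l (s-1) := by
    intro q hq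
    by_cases hqs : q = s - 1
    · rw [hqs]
    · have := hsep q (s-1) (by omega) (by omega)
      omega
  rw [promotion_no_max]
  · funext p q
    by_cases h : p < r + 1 ∧ q < s
    · rw [if_pos h, if_pos (by omega : p ≤ r ∧ q < s), if_pos (by omega : p ≤ r ∧ q < s)]
      omega
    · rw [if_neg h, if_neg (by omega)]
  · intro p q hp hq
    by_cases h : p ≤ r ∧ q < s
    · rw [if_pos h]
      have := hmono q hq
      omega
    · rw [if_neg h]
      have hl0 : l (s-1) + r + k ≥ 1 := by omega
      omega

/-- let `T` be the `(r+1) × s` rectangular tableau whose `j`-th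
column (0-indexed) consists of the consecutive entries `l j, l j + 1, …,
l j + r`, where the `l j` are positive, `l j + r < l (j+1)`, and
`l (s-1) + r ≤ n`.  Then `pr^{n - (l_s + r) + (r+1)}(T)` has first column
`1, 2, …, r+1`, and its column `j+1` consists of the entries of column `j` of
`T`, each increased by `n - (l_s + r) + (r+1)`. -/
theorem promotion_consecutive_columns (n r s : ℕ) (hs : 0 < s)
    (l : ℕ → ℕ) (hl1 : ∀ j, j < s → 1 ≤ l j)
    (hl2 : ∀ j, j + 1 < s → l j + r < l (j + 1))
    (hln : l (s - 1) + r ≤ n)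
    (T : ℕ → ℕ → ℕ)
    (hT : T = fun i j => if i ≤ r ∧ j < s then l j + i else 0) :
    (promotion (r + 1) s n)^[n - (l (s - 1) + r) + (r + 1)] T =
      fun i j =>
        if i ≤ r ∧ j < s then
          (if j = 0 then i + 1
           else l (j - 1) + i + (n - (l (s - 1) + r) + (r + 1)))
        else 0 := by
  set k := n - (l (s - 1) + r) with hk
  have hn : n = l (s-1) + r + k := by omega
  have hsep : ∀ a b, a < b → b < s → l a + r + 1 ≤ l b := by
    have key : ∀ b, b < s → ∀ a, a < b → l a + r + 1 ≤ l b := by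
      intro b
      induction b with
      | zero => intro _ a ha; omega
      | succ b ih =>
        intro hbs a hab
        have hb : l b + r < l (b+1) := hl2 b hbs
        by_cases hae : a = b
        · rw [hae]; omega
        · have := ih (by omega) a (by omega)
          omega
    intro a b hab hbs; exact key b hbs a hab
  have hl0 : 1 ≤ l (s-1) := hl1 (s-1) (by omega)
  -- phase 1
  have iter1 : ∀ m, m ≤ k → (promotion (r + 1) s n)^[m] T =
      fun i j => if i ≤ r ∧ j < s then l j + i + m else 0 := by
    intro m
    induction m with
    | zero =>
      intro _
      rw [Function.iterate_zero_apply, hT]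
      funext i j
      by_cases h : i ≤ r ∧ j < s
      · rw [if_pos h, if_pos h]
        omega
      · rw [if_neg h, if_neg h]
    | succ m ih =>
      intro hm
      rw [Function.iterate_succ_apply', ih (by omega),
        pre_lemma n r s k m hs (by omega) l hsep hn]
  -- phase 2
  have iter2 : ∀ t, t ≤ r + 1 → (promotion (r + 1) s n)^[t]
      (fun i j => if i ≤ r ∧ j < s then l j + i + k else 0) = stage l r s k t := by
    intro t
    induction t with
    | zero =>
      intro _
      rw [Function.iterate_zero_apply]
      funext i j
      simp only [stage]
      by_cases h : i ≤ r ∧ j < s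
      · rw [if_pos h, if_pos h, if_neg (by omega)]
        by_cases hjs : j = s - 1
        · rw [if_pos hjs, hjs]
        · rw [if_neg hjs]
          omega
      · rw [if_neg h, if_neg h]
    | succ t ih =>
      intro htr
      rw [Function.iterate_succ_apply', ih (by omega),
        step_lemma n r s k t hs (by omega) l hl1 hsep hn]
  -- assemble
  have hsplit : k + (r + 1) = (r + 1) + k := by omega
  rw [hsplit, Function.iterate_add_apply, iter1 k le_rfl, iter2 (r+1) le_rfl]
  funext i j
  simp only [stage]
  by_cases h : i ≤ r ∧ j < s
  · rw [if_pos h, if_pos h, if_pos (by omega)]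
    by_cases hj0 : j = 0
    · rw [if_pos hj0, if_pos hj0]
    · rw [if_neg hj0, if_neg hj0]
      omega
  · rw [if_neg h, if_neg h]
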